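/- Let α and β be finite positive measures on R^k with densities and total masses m_α, m_β, with α absolutely continuous with respect to β and KL(α‖β) finite, and let t, r > 0. Then KL^⊗(t·α ‖ r·β) = t² · KL^⊗(α ‖ β) + t² log(t²/r²) · m_α² + (r² − t²) · m_β². -/

import Mathlib

open MeasureTheory Matrix ENNReal

/-- Density (w.r.t. Lebesgue measure) of the centered Gaussian with covariance `S`. -/
noncomputable def gaussianPdf {ι : Type*} [Fintype ι] [DecidableEq ι]
    (S : Matrix ι ι ℝ) (x : ι → ℝ) : ℝ≥0∞ :=
  ENNReal.ofReal (Real.exp (-(x ⬝ᵥ (S⁻¹ *ᵥ x)) / 2) /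
    Real.sqrt ((2 * Real.pi) ^ (Fintype.card ι) * S.det))

/-- The centered Gaussian measure `N(0, S)` on `ι → ℝ` with covariance matrix `S`. -/
noncomputable def gaussianMeasure {ι : Type*} [Fintype ι] [DecidableEq ι]
    (S : Matrix ι ι ℝ) : Measure (ι → ℝ) :=
  MeasureTheory.volume.withDensity (gaussianPdf S)

/-- Generalized Kullback–Leibler divergence between positive measures:
`KL(α‖β) = ∫ log (dα/dβ) dα + β(univ) - α(univ)`.
For probability measures this is the usual Kullback–Leibler divergence. -/
noncomputable def KLgen {X : Type*} [MeasurableSpace X] (α β : Measure X) : ℝ :=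
  (∫ x, Real.log ((α.rnDeriv β x).toReal) ∂α) + (β Set.univ).toReal - (α Set.univ).toReal

section Aux
variable {X : Type*} [MeasurableSpace X]

lemma KLgen_aux {X : Type*} [MeasurableSpace X] (α β : Measure X) : KLgen α β =
  (∫ x, Real.log ((α.rnDeriv β x).toReal) ∂α) + (β Set.univ).toReal - (α Set.univ).toReal := rfl

lemma KLgen_smul (μ ν : Measure X) [IsFiniteMeasure μ] [IsFiniteMeasure ν]
    (hμν : μ ≪ ν)
    (hint : Integrable (fun x => Real.log ((μ.rnDeriv ν x).toReal)) μ)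
    {c d : ℝ} (hc : 0 < c) (hd : 0 < d) :
    KLgen ((ENNReal.ofReal c) • μ) ((ENNReal.ofReal d) • ν)
      = c * KLgen μ ν + c * Real.log (c / d) * (μ Set.univ).toReal
        + (d - c) * (ν Set.univ).toReal := by
  have hc0 : ENNReal.ofReal c ≠ 0 := by simp [ENNReal.ofReal_eq_zero, not_le, hc]
  have hd0 : ENNReal.ofReal d ≠ 0 := by simp [ENNReal.ofReal_eq_zero, not_le, hd]
  haveI : IsFiniteMeasure ((ENNReal.ofReal c) • μ) := by
    constructor
    simp [Measure.smul_apply, smul_eq_mul, ENNReal.mul_lt_top, measure_lt_top]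
  haveI : IsFiniteMeasure ((ENNReal.ofReal d) • ν) := by
    constructor
    simp [Measure.smul_apply, smul_eq_mul, ENNReal.mul_lt_top, measure_lt_top]
  -- a.e. identification of the Radon–Nikodym derivative
  have h1 : ((ENNReal.ofReal c) • μ).rnDeriv ((ENNReal.ofReal d) • ν)
      =ᵐ[ν] (ENNReal.ofReal c) • μ.rnDeriv ((ENNReal.ofReal d) • ν) := by
    have := Measure.rnDeriv_smul_left_of_ne_top μ ((ENNReal.ofReal d) • ν)
      (r := ENNReal.ofReal c) ENNReal.ofReal_ne_top
    exact (Measure.ae_ennreal_smul_measure_iff hd0).mp this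
  have h2 : μ.rnDeriv ((ENNReal.ofReal d) • ν) =ᵐ[ν] (ENNReal.ofReal d)⁻¹ • μ.rnDeriv ν :=
    Measure.rnDeriv_smul_right_of_ne_top μ ν hd0 ENNReal.ofReal_ne_top
  have hkey : ∀ᵐ x ∂μ, Real.log ((((ENNReal.ofReal c) • μ).rnDeriv ((ENNReal.ofReal d) • ν) x).toReal)
      = Real.log (c / d) + Real.log ((μ.rnDeriv ν x).toReal) := by
    filter_upwards [hμν.ae_le h1, hμν.ae_le h2, Measure.rnDeriv_pos hμν,
      hμν.ae_le (Measure.rnDeriv_ne_top μ ν)] with x hx1 hx2 hpos htop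
    rw [hx1, Pi.smul_apply, smul_eq_mul, hx2, Pi.smul_apply, smul_eq_mul, ← mul_assoc]
    rw [ENNReal.toReal_mul, ENNReal.toReal_mul, ENNReal.toReal_inv,
      ENNReal.toReal_ofReal hc.le, ENNReal.toReal_ofReal hd.le]
    rw [mul_assoc] -- c * (d⁻¹ * z) ... we want (c * d⁻¹) * z = c/d * z
    rw [← mul_assoc]
    have hz : (μ.rnDeriv ν x).toReal ≠ 0 := by
      exact (ENNReal.toReal_pos hpos.ne' htop).ne'
    rw [Real.log_mul (by positivity) hz, div_eq_mul_inv]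
  calc KLgen ((ENNReal.ofReal c) • μ) ((ENNReal.ofReal d) • ν)
      = (∫ x, Real.log ((((ENNReal.ofReal c) • μ).rnDeriv ((ENNReal.ofReal d) • ν) x).toReal)
          ∂((ENNReal.ofReal c) • μ))
        + (((ENNReal.ofReal d) • ν) Set.univ).toReal
        - (((ENNReal.ofReal c) • μ) Set.univ).toReal := rfl
    _ = c * (Real.log (c / d) * (μ Set.univ).toReal
          + ∫ x, Real.log ((μ.rnDeriv ν x).toReal) ∂μ)
        + d * (ν Set.univ).toReal - c * (μ Set.univ).toReal := by
        rw [integral_smul_measure, integral_congr_ae hkey, integral_add (integrable_const _) hint,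
          integral_const]
        simp only [Measure.smul_apply, smul_eq_mul, ENNReal.toReal_mul,
          ENNReal.toReal_ofReal hc.le, ENNReal.toReal_ofReal hd.le, measureReal_def]
        ring
    _ = c * KLgen μ ν + c * Real.log (c / d) * (μ Set.univ).toReal
        + (d - c) * (ν Set.univ).toReal := by
        rw [KLgen_aux]; ring

lemma rnDeriv_prod_ae (α β : Measure X) [IsFiniteMeasure α] [IsFiniteMeasure β] (hαβ : α ≪ β) :
    (fun p : X × X => α.rnDeriv β p.1 * α.rnDeriv β p.2) =ᵐ[β.prod β]
      (α.prod α).rnDeriv (β.prod β) := by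
  have hg := Measure.measurable_rnDeriv α β
  have hf : Measurable (fun p : X × X => α.rnDeriv β p.1 * α.rnDeriv β p.2) :=
    (hg.comp measurable_fst).mul (hg.comp measurable_snd)
  refine Measure.eq_rnDeriv hf Measure.MutuallySingular.zero_left ?_
  rw [zero_add]
  refine Measure.prod_eq fun s t hs ht => ?_
  rw [withDensity_apply _ (hs.prod ht), ← Measure.prod_restrict,
    lintegral_prod_mul hg.aemeasurable hg.aemeasurable,
    Measure.setLIntegral_rnDeriv hαβ, Measure.setLIntegral_rnDeriv hαβ]

lemma integrable_log_rnDeriv_prod (α β : Measure X) [IsFiniteMeasure α] [IsFiniteMeasure β]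
    (hαβ : α ≪ β) (hint : Integrable (fun x => Real.log ((α.rnDeriv β x).toReal)) α) :
    Integrable (fun p => Real.log (((α.prod α).rnDeriv (β.prod β) p).toReal)) (α.prod α) := by
  set L := fun x => Real.log ((α.rnDeriv β x).toReal) with hL
  have hgm := Measure.measurable_rnDeriv α β
  have hLm : Measurable L := Real.measurable_log.comp hgm.ennreal_toReal
  have hI : Integrable L ((α Set.univ) • α) := hint.smul_measure (measure_ne_top α _)
  have h1 : Integrable (fun p : X × X => L p.1) (α.prod α) := by
    have h : Integrable L ((α.prod α).map Prod.fst) := by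
      rw [Measure.map_fst_prod]; exact hI
    exact (integrable_map_measure hLm.aestronglyMeasurable measurable_fst.aemeasurable).mp h
  have h2 : Integrable (fun p : X × X => L p.2) (α.prod α) := by
    have h : Integrable L ((α.prod α).map Prod.snd) := by
      rw [Measure.map_snd_prod]; exact hI
    exact (integrable_map_measure hLm.aestronglyMeasurable measurable_snd.aemeasurable).mp h
  have hprodac : (α.prod α) ≪ (β.prod β) := hαβ.prod hαβ
  have hae : (α.prod α).rnDeriv (β.prod β)
      =ᵐ[α.prod α] (fun p : X × X => α.rnDeriv β p.1 * α.rnDeriv β p.2) :=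
    hprodac.ae_le (rnDeriv_prod_ae α β hαβ).symm
  have hx : ∀ᵐ x ∂α, 0 < α.rnDeriv β x ∧ α.rnDeriv β x ≠ ∞ :=
    (Measure.rnDeriv_pos hαβ).and (hαβ.ae_le (Measure.rnDeriv_ne_top α β))
  have hx1 : ∀ᵐ p : X × X ∂(α.prod α), 0 < α.rnDeriv β p.1 ∧ α.rnDeriv β p.1 ≠ ∞ :=
    ae_of_ae_map (f := Prod.fst) (μ := α.prod α) measurable_fst.aemeasurable
      (p := fun x => 0 < α.rnDeriv β x ∧ α.rnDeriv β x ≠ ∞)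
      (by rw [Measure.map_fst_prod]; exact Measure.ae_smul_measure hx _)
  have hx2 : ∀ᵐ p : X × X ∂(α.prod α), 0 < α.rnDeriv β p.2 ∧ α.rnDeriv β p.2 ≠ ∞ :=
    ae_of_ae_map (f := Prod.snd) (μ := α.prod α) measurable_snd.aemeasurable
      (p := fun x => 0 < α.rnDeriv β x ∧ α.rnDeriv β x ≠ ∞)
      (by rw [Measure.map_snd_prod]; exact Measure.ae_smul_measure hx _)
  refine (h1.add h2).congr ?_
  filter_upwards [hae, hx1, hx2] with p hp h1p h2p
  rw [hp, ENNReal.toReal_mul, hL]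
  rw [Real.log_mul (ENNReal.toReal_pos h1p.1.ne' h1p.2).ne' (ENNReal.toReal_pos h2p.1.ne' h2p.2).ne']
  rfl

lemma smul_prod_smul (γ : Measure X) [IsFiniteMeasure γ] {u : ℝ} (hu : 0 < u) :
    ((ENNReal.ofReal u) • γ).prod ((ENNReal.ofReal u) • γ)
      = (ENNReal.ofReal (u ^ 2)) • (γ.prod γ) := by
  haveI : IsFiniteMeasure ((ENNReal.ofReal u) • γ) := by
    constructor
    simp [Measure.smul_apply, smul_eq_mul, ENNReal.mul_lt_top, measure_lt_top]
  refine Measure.prod_eq fun s t hs ht => ?_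
  simp only [Measure.smul_apply, smul_eq_mul, Measure.prod_prod,
    ENNReal.ofReal_pow hu.le]
  ring

end Aux

/-- for finite positive measures `α ≪ β` on `ℝ^k` with densities, finite KL
divergence and scalars `t, r > 0`, the quadratic KL divergence `KL⊗(α‖β) := KL(α⊗α ‖ β⊗β)`
satisfies `KL⊗(t·α ‖ r·β) = t² KL⊗(α‖β) + t² log(t²/r²) mα² + (r² - t²) mβ²`. -/

theorem kl_tensor_square_scaled
    (k : ℕ) (α β : Measure (Fin k → ℝ))
    [IsFiniteMeasure α] [IsFiniteMeasure β]
    (hαd : α ≪ (MeasureTheory.volume : Measure (Fin k → ℝ)))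
    (hβd : β ≪ (MeasureTheory.volume : Measure (Fin k → ℝ)))
    (hαβ : α ≪ β)
    (hint : Integrable (fun x => Real.log ((α.rnDeriv β x).toReal)) α)
    (t r : ℝ) (ht : 0 < t) (hr : 0 < r) :
    KLgen (((ENNReal.ofReal t) • α).prod ((ENNReal.ofReal t) • α))
        (((ENNReal.ofReal r) • β).prod ((ENNReal.ofReal r) • β))
      = t ^ 2 * KLgen (α.prod α) (β.prod β)
        + t ^ 2 * Real.log (t ^ 2 / r ^ 2) * ((α Set.univ).toReal) ^ 2
        + (r ^ 2 - t ^ 2) * ((β Set.univ).toReal) ^ 2 := by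
  rw [smul_prod_smul α ht, smul_prod_smul β hr]
  rw [KLgen_smul (α.prod α) (β.prod β) (hαβ.prod hαβ)
    (integrable_log_rnDeriv_prod α β hαβ hint) (by positivity) (by positivity)]
  have hα2 : ((α.prod α) Set.univ).toReal = ((α Set.univ).toReal) ^ 2 := by
    rw [← Set.univ_prod_univ, Measure.prod_prod, ENNReal.toReal_mul, sq]
  have hβ2 : ((β.prod β) Set.univ).toReal = ((β Set.univ).toReal) ^ 2 := by
    rw [← Set.univ_prod_univ, Measure.prod_prod, ENNReal.toReal_mul, sq]
  rw [hα2, hβ2]
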